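/- Let M be a module over R = ℤ_p[[X]] and let a ∈ pℤ_p. Suppose that there is a Weierstrass polynomial f ∈ ℤ_p[X] whose image in R annihilates M (f·M = 0), and that multiplication by X − a is injective on M (i.e. M[X − a] = 0). Then there exists an integer k ≥ 1 such that p^k annihilates the quotient module M/(X − a)M; in particular, M/(X − a)M is a p-primary module (every element is killed by a power of p). -/

import Mathlib

open Polynomial PowerSeries

/-- A Weierstrass polynomial over `ℤ_p`: a monic polynomial all of whose non-leading
coefficients are divisible by `p`. -/
def IsWeierstrassPoly (p : ℕ) [Fact p.Prime] (f : Polynomial ℤ_[p]) : Prop :=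
  f.Monic ∧ ∀ i < f.natDegree, (p : ℤ_[p]) ∣ f.coeff i

section aux
variable (p : ℕ) [Fact p.Prime]

lemma dvd_iff_toZMod (c : ℤ_[p]) : (p : ℤ_[p]) ∣ c ↔ PadicInt.toZMod c = 0 := by
  rw [← Ideal.mem_span_singleton, ← PadicInt.maximalIdeal_eq_span_p, ← PadicInt.ker_toZMod,
    RingHom.mem_ker]

lemma weier_map (f : Polynomial ℤ_[p]) (hf : IsWeierstrassPoly p f) :
    f.map (PadicInt.toZMod) = Polynomial.X ^ f.natDegree := by
  ext i
  rw [Polynomial.coeff_map, Polynomial.coeff_X_pow]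
  rcases lt_trichotomy i f.natDegree with h | h | h
  · rw [if_neg h.ne, (dvd_iff_toZMod p _).mp (hf.2 i h)]
  · subst h; simp [hf.1.coeff_natDegree]
  · rw [if_neg h.ne', f.coeff_eq_zero_of_natDegree_lt h, map_zero]

variable (M : Type) [AddCommGroup M] [Module (PowerSeries ℤ_[p]) M]

lemma key (a : ℤ_[p]) (ha : (p : ℤ_[p]) ∣ a)
    (hinj : ∀ m : M,
      (PowerSeries.X - PowerSeries.C a : PowerSeries ℤ_[p]) • m = 0 → m = 0) :
    ∀ n : ℕ, ∀ f : Polynomial ℤ_[p], f.natDegree ≤ n → IsWeierstrassPoly p f →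
      (∀ m : M, (Polynomial.coeToPowerSeries.ringHom f : PowerSeries ℤ_[p]) • m = 0) →
      ∃ k : ℕ, 1 ≤ k ∧
        ∀ m : M ⧸ LinearMap.range (LinearMap.lsmul (PowerSeries ℤ_[p]) M
            (PowerSeries.X - PowerSeries.C a)),
          ((p : PowerSeries ℤ_[p]) ^ k) • m = 0 := by
  intro n
  induction n with
  | zero =>
    intro f hdeg hf hfM
    have hf1 : f = 1 := hf.1.natDegree_eq_zero.mp (Nat.le_zero.mp hdeg)
    refine ⟨1, le_refl 1, fun m => ?_⟩
    induction m using Submodule.Quotient.induction_on with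
    | _ x =>
      have := hfM x
      rw [hf1, map_one, one_smul] at this
      rw [this]
      simp
  | succ n ih =>
    intro f hdeg hf hfM
    rcases le_or_gt f.natDegree n with hle | hgt
    · exact ih f hle hf hfM
    have hdeq : f.natDegree = n + 1 := le_antisymm hdeg hgt
    set e := f.eval a with he_def
    by_cases he : e = 0
    · -- f = (X - C a) * g
      obtain ⟨g, hg⟩ := (Polynomial.dvd_iff_isRoot).mpr (by simpa [Polynomial.IsRoot] using he)
      have hgmonic : g.Monic :=
        (Polynomial.monic_X_sub_C a).of_mul_monic_left (hg ▸ hf.1)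
      have hgdeg : g.natDegree = n := by
        have := Polynomial.natDegree_mul (Polynomial.X_sub_C_ne_zero a) hgmonic.ne_zero
        rw [← hg, hdeq, Polynomial.natDegree_X_sub_C] at this
        omega
      have hgmap : g.map (PadicInt.toZMod) = Polynomial.X ^ n := by
        have h1 : f.map (PadicInt.toZMod) = Polynomial.X ^ (n + 1) := by
          rw [weier_map p f hf, hdeq]
        have ha0 : (PadicInt.toZMod a : ZMod p) = 0 := (dvd_iff_toZMod p a).mp ha
        have h2 : f.map (PadicInt.toZMod) =
            Polynomial.X * g.map (PadicInt.toZMod) := by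
          rw [hg, Polynomial.map_mul, Polynomial.map_sub, Polynomial.map_X,
            Polynomial.map_C, ha0, map_zero, sub_zero]
        have : Polynomial.X * g.map (PadicInt.toZMod) =
            Polynomial.X * Polynomial.X ^ n := by
          rw [← h2, h1, pow_succ, mul_comm]
        exact mul_left_cancel₀ Polynomial.X_ne_zero this
      have hgW : IsWeierstrassPoly p g := by
        refine ⟨hgmonic, fun i hi => ?_⟩
        rw [dvd_iff_toZMod]
        have := congrArg (fun q => Polynomial.coeff q i) hgmap
        simpa [Polynomial.coeff_X_pow, (hgdeg ▸ hi).ne] using this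
      refine ih g (hgdeg.le) hgW (fun m => ?_)
      apply hinj
      have := hfM m
      rw [hg, map_mul, mul_smul] at this
      convert this using 2
      simp [map_sub]
    · -- e ≠ 0; but p ∣ e
      have hpe : (p : ℤ_[p]) ∣ e := by
        rw [dvd_iff_toZMod]
        have : (PadicInt.toZMod : ℤ_[p] →+* ZMod p) (f.eval a)
            = (f.map PadicInt.toZMod).eval (PadicInt.toZMod a) := by
          rw [Polynomial.eval_map, Polynomial.eval₂_at_apply]
        rw [he_def, this, weier_map p f hf, (dvd_iff_toZMod p a).mp ha, hdeq]
        simp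
      obtain ⟨b, hb⟩ := hpe
      have hbne : b ≠ 0 := by rintro rfl; simp at hb; exact he hb
      obtain u : ℤ_[p]ˣ := PadicInt.unitCoeff hbne
      have hbspec := PadicInt.unitCoeff_spec hbne
      set j := b.valuation
      set u' := PadicInt.unitCoeff hbne
      have hespec : e = (u' : ℤ_[p]) * (p : ℤ_[p]) ^ (j + 1) := by
        rw [hb, hbspec]; ring
      -- claim : C e kills the quotient
      have hclaim : ∀ m : M, (PowerSeries.C e) • m ∈
          LinearMap.range (LinearMap.lsmul (PowerSeries ℤ_[p]) M
            (PowerSeries.X - PowerSeries.C a)) := by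
        intro m
        obtain ⟨g, hg⟩ := Polynomial.X_sub_C_dvd_sub_C_eval (a := a) (p := f)
        have hfe : f = Polynomial.C e + (Polynomial.X - Polynomial.C a) * g := by
          rw [← hg]; ring
        have h0 := hfM m
        rw [hfe, map_add, map_mul, add_smul, mul_smul] at h0
        refine ⟨-(Polynomial.coeToPowerSeries.ringHom g • m), ?_⟩
        have hXC : (Polynomial.coeToPowerSeries.ringHom
            (Polynomial.X - Polynomial.C a) : PowerSeries ℤ_[p])
            = PowerSeries.X - PowerSeries.C a := by
          simp [map_sub]
        have hCe : (Polynomial.coeToPowerSeries.ringHom (Polynomial.C e) : PowerSeries ℤ_[p])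
            = PowerSeries.C e := by simp
        rw [LinearMap.lsmul_apply, smul_neg, ← hXC]
        rw [hXC] at h0 ⊢
        rw [← hCe]
        exact neg_eq_of_add_eq_zero_left h0
      refine ⟨j + 1, Nat.le_add_left 1 j, fun m => ?_⟩
      induction m using Submodule.Quotient.induction_on with
      | _ x =>
        have h1 : (PowerSeries.C e) • (Submodule.Quotient.mk x :
            M ⧸ LinearMap.range (LinearMap.lsmul (PowerSeries ℤ_[p]) M
              (PowerSeries.X - PowerSeries.C a))) = 0 := by
          rw [← Submodule.Quotient.mk_smul, Submodule.Quotient.mk_eq_zero]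
          exact hclaim x
        have h2 : ((p : PowerSeries ℤ_[p]) ^ (j + 1)) =
            PowerSeries.C ((u'⁻¹ : ℤ_[p]ˣ) : ℤ_[p]) * PowerSeries.C e := by
          rw [← map_mul, hespec, ← mul_assoc, Units.inv_mul, one_mul, map_pow, map_natCast]
        rw [h2, mul_smul, h1, smul_zero]

end aux

/-- Let `M` be a module over `R = ℤ_p⟦X⟧` and `a ∈ pℤ_p`. If some Weierstrass
polynomial `f` annihilates `M` and multiplication by `X - a` is injective on `M`, then there is
`k ≥ 1` with `p^k · (M/(X - a)M) = 0`; in particular `M/(X - a)M` is `p`-primary. -/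
theorem pow_p_annihilates_quotient_of_weierstrass_annihilator
    (p : ℕ) [Fact p.Prime]
    (M : Type) [AddCommGroup M] [Module (PowerSeries ℤ_[p]) M]
    (a : ℤ_[p]) (ha : (p : ℤ_[p]) ∣ a)
    (f : Polynomial ℤ_[p]) (hf : IsWeierstrassPoly p f)
    (hfM : ∀ m : M, (Polynomial.coeToPowerSeries.ringHom f : PowerSeries ℤ_[p]) • m = 0)
    (hinj : ∀ m : M,
      (PowerSeries.X - PowerSeries.C a : PowerSeries ℤ_[p]) • m = 0 → m = 0) :
    ∃ k : ℕ, 1 ≤ k ∧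
      (∀ m : M ⧸ LinearMap.range (LinearMap.lsmul (PowerSeries ℤ_[p]) M
          (PowerSeries.X - PowerSeries.C a)),
        ((p : PowerSeries ℤ_[p]) ^ k) • m = 0) ∧
      (∀ m : M ⧸ LinearMap.range (LinearMap.lsmul (PowerSeries ℤ_[p]) M
          (PowerSeries.X - PowerSeries.C a)),
        ∃ j : ℕ, ((p : PowerSeries ℤ_[p]) ^ j) • m = 0) := by
  obtain ⟨k, hk1, hk⟩ := key p M a ha hinj f.natDegree f le_rfl hf hfM
  exact ⟨k, hk1, hk, fun m => ⟨k, hk m⟩⟩
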